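/- For an oriented submanifold M^m of ℝⁿ, the stress-energy tensor of the Gauss map satisfies the identity S^G = (Ric − (r/2)g) − (1/2)S₂^i + (1/4)|τ(i)|² g, where i : M → ℝⁿ is the inclusion, S₂^i its biharmonic stress-energy tensor, r the scalar curvature, and τ(i) = mH. -/
import Mathlib

open scoped RealInnerProductSpace

/-- the algebraic identity `S^G = (Ric − (r/2) g) − (1/2) S₂^i + (1/4)|τ(i)|² g`
for an oriented submanifold `Mᵐ ⊂ ℝⁿ`, at a point.  Here `B` is the second fundamental form,
`H = (1/m) trace B`, `τ = m H` is the tension field of the inclusion, `r = trace Ric`,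
`G*g_can = m⟨H,B⟩ − Ric`, `e(G) = (m²/2)|H|² − r/2`, `S^G = e(G) g − G*g_can`, and
`S₂(X,Y) = −(1/2)|τ|² ⟨X,Y⟩ + 2⟨τ, B(X,Y)⟩` (the biharmonic stress-energy tensor of a
Riemannian immersion). -/
theorem stmt_9 {V W : Type*}
    [NormedAddCommGroup V] [InnerProductSpace ℝ V]
    [NormedAddCommGroup W] [InnerProductSpace ℝ W]
    {m : ℕ} (hm : 0 < m) (e : OrthonormalBasis (Fin m) ℝ V)
    (B : V →ₗ[ℝ] V →ₗ[ℝ] W) (hBsymm : ∀ X Y : V, B X Y = B Y X)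
    (H : W) (hH : H = (m : ℝ)⁻¹ • ∑ i : Fin m, B (e i) (e i))
    (τ : W) (hτ : τ = (m : ℝ) • H)
    (Ric : V → V → ℝ) (r : ℝ) (hr : r = ∑ i : Fin m, Ric (e i) (e i))
    (Gpull : V → V → ℝ)
    (hGpull : ∀ X Y : V, Gpull X Y = (m : ℝ) * ⟪H, B X Y⟫ - Ric X Y)
    (eG : ℝ) (heG : eG = ((m : ℝ) ^ 2 / 2) * ‖H‖ ^ 2 - r / 2)
    (SG : V → V → ℝ) (hSG : ∀ X Y : V, SG X Y = eG * ⟪X, Y⟫ - Gpull X Y)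
    (S2 : V → V → ℝ)
    (hS2 : ∀ X Y : V, S2 X Y = -(1 / 2) * ‖τ‖ ^ 2 * ⟪X, Y⟫ + 2 * ⟪τ, B X Y⟫) :
    ∀ X Y : V, SG X Y
      = (Ric X Y - r / 2 * ⟪X, Y⟫) - (1 / 2) * S2 X Y + (1 / 4) * ‖τ‖ ^ 2 * ⟪X, Y⟫ := by
  intro X Y
  have hnorm : ‖τ‖ ^ 2 = (m : ℝ) ^ 2 * ‖H‖ ^ 2 := by
    rw [hτ, norm_smul]
    simp [mul_pow, sq_abs]
  have hip : ⟪τ, B X Y⟫ = (m : ℝ) * ⟪H, B X Y⟫ := by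
    rw [hτ, real_inner_smul_left]
  rw [hSG, hS2, hGpull, heG, hnorm, hip]
  ring
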